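/- Let X be a nonempty compact Hausdorff topological space and h : [0,1] × X → ℝ continuous. Then ∫₀¹ max_{x∈X} h(t,x) dt ≥ max_{x∈X} ∫₀¹ h(t,x) dt, and equality holds if and only if there exists a point x₊ ∈ X such that h(t,x₊) = max_{x∈X} h(t,x) for all t ∈ [0,1], i.e., if and only if the intersection ⋂_{t∈[0,1]} maxset(h_t) is nonempty, where maxset(h_t) := { x ∈ X : h(t,x) = max_X h(t,·) }. -/
import Mathlib

open Set MeasureTheory intervalIntegral

/-- The sup functional on `C(X, ℝ)` for compact nonempty `X` is Lipschitz. -/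
lemma continuous_iSup_apply {X : Type*} [TopologicalSpace X] [CompactSpace X] [Nonempty X] :
    Continuous fun f : C(X, ℝ) => ⨆ x, f x := by
  have key : ∀ f g : C(X, ℝ), (⨆ x, f x) ≤ (⨆ x, g x) + dist f g := by
    intro f g
    refine ciSup_le fun x => ?_
    have h1 : f x ≤ g x + dist f g := by
      have := ContinuousMap.dist_apply_le_dist (f := f) (g := g) x
      have := abs_sub_le_iff.mp (by simpa [Real.dist_eq] using this)
      linarith [this.1]
    exact h1.trans (by
      have : g x ≤ ⨆ x, g x := le_ciSup ((isCompact_range g.continuous).bddAbove) x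
      linarith)
  have lip : LipschitzWith 1 (fun f : C(X, ℝ) => ⨆ x, f x) := by
    refine LipschitzWith.of_dist_le_mul fun f g => ?_
    rw [Real.dist_eq]; push_cast; rw [one_mul]
    have h1 := key f g
    have h2 := key g f
    rw [dist_comm g f] at h2
    rw [abs_sub_le_iff]
    constructor <;> linarith
  exact lip.continuous


/-- For a nonempty compact Hausdorff space X and continuous
`h : [0,1] × X → ℝ`, one has `∫₀¹ max_x h(t,x) dt ≥ max_x ∫₀¹ h(t,x) dt`, with
equality if and only if there is a point `xp ∈ X` with `h(t,xp) = max_x h(t,x)`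
for all `t ∈ [0,1]` (i.e. iff `⋂_{t∈[0,1]} maxset(h_t)` is nonempty). -/
theorem integral_max_ge_max_integral
    {X : Type*} [TopologicalSpace X] [CompactSpace X] [T2Space X] [Nonempty X]
    (h : ℝ → X → ℝ)
    (hcont : ContinuousOn (fun p : ℝ × X => h p.1 p.2) (Icc 0 1 ×ˢ univ)) :
    (⨆ x, ∫ t in (0:ℝ)..1, h t x) ≤ (∫ t in (0:ℝ)..1, ⨆ x, h t x) ∧
    ((∫ t in (0:ℝ)..1, ⨆ x, h t x) = (⨆ x, ∫ t in (0:ℝ)..1, h t x) ↔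
      ∃ xp : X, ∀ t ∈ Icc (0:ℝ) 1, h t xp = ⨆ x, h t x) := by
  -- Extend h continuously to all of ℝ × X using projIcc
  set H : ℝ → X → ℝ := fun t x => h (projIcc (0:ℝ) 1 zero_le_one t) x with hHdef
  have Hcont : Continuous fun p : ℝ × X => H p.1 p.2 := by
    have hc : Continuous fun p : ℝ × X => (((projIcc (0:ℝ) 1 zero_le_one p.1 : Icc (0:ℝ) 1) : ℝ), p.2) :=
      (continuous_subtype_val.comp (continuous_projIcc.comp continuous_fst)).prodMk
        continuous_snd
    exact hcont.comp_continuous hc fun p => ⟨(projIcc (0:ℝ) 1 zero_le_one p.1).2, mem_univ _⟩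
  have Heq : ∀ t ∈ Icc (0:ℝ) 1, ∀ x, H t x = h t x := by
    intro t ht x
    simp only [hHdef, projIcc_of_mem zero_le_one ht]
  -- the sup function M
  set M : ℝ → ℝ := fun t => ⨆ x, H t x with hMdef
  have Htcont : ∀ t, Continuous (H t) := fun t =>
    Hcont.comp (continuous_const.prodMk continuous_id)
  have Hxcont : ∀ x, Continuous fun t => H t x := fun x =>
    Hcont.comp (continuous_id.prodMk continuous_const)
  have Hbdd : ∀ t, BddAbove (Set.range (H t)) := fun t =>
    (isCompact_range (Htcont t)).bddAbove
  have hle : ∀ t x, H t x ≤ M t := fun t x => le_ciSup (Hbdd t) x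
  -- continuity of M
  have Mcont : Continuous M := by
    have : M = (fun f : C(X, ℝ) => ⨆ x, f x) ∘
        (fun t => ContinuousMap.curry ⟨fun p : ℝ × X => H p.1 p.2, Hcont⟩ t) := by
      funext t; rfl
    rw [this]
    exact continuous_iSup_apply.comp (ContinuousMap.curry _).continuous
  -- sups agree on Icc
  have Msup : ∀ t ∈ Icc (0:ℝ) 1, M t = ⨆ x, h t x := by
    intro t ht
    simp only [hMdef]
    exact congrArg iSup (funext (Heq t ht))
  have hIcc : uIcc (0:ℝ) 1 = Icc 0 1 := uIcc_of_le zero_le_one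
  -- the integral functional G
  set G : X → ℝ := fun x => ∫ t in (0:ℝ)..1, H t x with hGdef
  have Gcont : Continuous G := by
    apply intervalIntegral.continuous_parametric_intervalIntegral_of_continuous'
    exact Hcont.comp continuous_swap
  have Geq : ∀ x, (∫ t in (0:ℝ)..1, h t x) = G x := by
    intro x
    apply intervalIntegral.integral_congr
    intro t ht
    rw [hIcc] at ht
    exact (Heq t ht x).symm
  have hsupeq : (⨆ x, ∫ t in (0:ℝ)..1, h t x) = ⨆ x, G x := by
    exact congrArg iSup (funext Geq)
  have hMeq : (∫ t in (0:ℝ)..1, ⨆ x, h t x) = ∫ t in (0:ℝ)..1, M t := by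
    apply intervalIntegral.integral_congr
    intro t ht
    rw [hIcc] at ht
    exact (Msup t ht).symm
  -- integrabilities
  have Mint : IntervalIntegrable M volume 0 1 := Mcont.intervalIntegrable 0 1
  have Hint : ∀ x, IntervalIntegrable (fun t => H t x) volume 0 1 :=
    fun x => (Hxcont x).intervalIntegrable 0 1
  -- the inequality
  have Gle : ∀ x, G x ≤ ∫ t in (0:ℝ)..1, M t := by
    intro x
    exact intervalIntegral.integral_mono_on zero_le_one (Hint x) Mint fun t _ => hle t x
  have GbddAbove : BddAbove (Set.range G) := (isCompact_range Gcont).bddAbove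
  have ineq : (⨆ x, ∫ t in (0:ℝ)..1, h t x) ≤ ∫ t in (0:ℝ)..1, ⨆ x, h t x := by
    rw [hsupeq, hMeq]
    exact ciSup_le Gle
  refine ⟨ineq, ?_, ?_⟩
  · -- equality → common max point
    intro heqI
    obtain ⟨x0, -, hx0⟩ := isCompact_univ.exists_isMaxOn univ_nonempty Gcont.continuousOn
    have hGx0 : (⨆ x, G x) = G x0 :=
      le_antisymm (ciSup_le fun x => hx0 (mem_univ x)) (le_ciSup GbddAbove x0)
    have heqI' : (∫ t in (0:ℝ)..1, M t) = G x0 := by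
      rw [← hMeq, heqI, hsupeq, hGx0]
    -- M = H · x0 on Icc
    have key : ∀ t ∈ Icc (0:ℝ) 1, M t = H t x0 := by
      by_contra hcon
      push_neg at hcon
      obtain ⟨t0, ht0, hne⟩ := hcon
      have hpos : 0 < ∫ t in (0:ℝ)..1, (M t - H t x0) := by
        apply intervalIntegral.integral_pos zero_lt_one
        · exact (Mcont.sub (Hxcont x0)).continuousOn
        · exact fun t _ => sub_nonneg.mpr (hle t x0)
        · exact ⟨t0, ht0, sub_pos.mpr (lt_of_le_of_ne (hle t0 x0) (Ne.symm hne))⟩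
      rw [intervalIntegral.integral_sub Mint (Hint x0), heqI'] at hpos
      simp [hGdef] at hpos
    refine ⟨x0, fun t ht => ?_⟩
    rw [← Heq t ht x0, ← key t ht]
    exact Msup t ht
  · -- common max point → equality
    rintro ⟨xp, hxp⟩
    refine le_antisymm ?_ ineq
    have : (∫ t in (0:ℝ)..1, ⨆ x, h t x) = G xp := by
      apply intervalIntegral.integral_congr
      intro t ht
      rw [hIcc] at ht
      show (⨆ x, h t x) = H t xp
      rw [← hxp t ht, Heq t ht xp]
    rw [this, hsupeq]
    exact le_ciSup GbddAbove xp
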